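/- Let q be an even prime power, let F_q be a finite field with q elements, and let m ≥ 2. Then Sp_{2m}(q) = Matrix.symplecticGroup (Fin m) F_q contains an involution x (a symplectic transvection) whose centralizer has cardinality q^{2m−1} · |Sp_{2m−2}(q)|, where Sp_{2m−2}(q) = Matrix.symplecticGroup (Fin (m−1)) F_q. -/

import Mathlib

namespace SpTransAux

open Matrix

variable {F : Type*} [Field F] {k : Type*} [Fintype k] [DecidableEq k]

/-- The index type: two distinguished indices plus a symplectic pair of copies of `k`. -/
abbrev T (k : Type*) := (Unit ⊕ Unit) ⊕ (k ⊕ k)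

/-- first distinguished index -/
abbrev A1 : T k := Sum.inl (Sum.inl ())
/-- second distinguished index -/
abbrev A2 : T k := Sum.inl (Sum.inr ())

/-- The symplectic form matrix in shuffled coordinates. -/
def JJ (F : Type*) [Field F] (k : Type*) [Fintype k] [DecidableEq k] :
    Matrix (T k) (T k) F :=
  fromBlocks (Matrix.J Unit F) 0 0 (Matrix.J k F)

/-- The transvection in shuffled coordinates. -/
def X' (F : Type*) [Field F] (k : Type*) [Fintype k] [DecidableEq k] :
    Matrix (T k) (T k) F :=
  1 + Matrix.single A1 A2 1

lemma sumJ (v w : k ⊕ k → F) :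
    ∑ s, ∑ t, v s * Matrix.J k F s t * w t
      = ∑ a, v (Sum.inr a) * w (Sum.inl a) - ∑ a, v (Sum.inl a) * w (Sum.inr a) := by
  rw [Fintype.sum_sum_type]
  simp only [Matrix.J, fromBlocks, of_apply, Sum.elim_inl, Sum.elim_inr, Fintype.sum_sum_type,
    Matrix.zero_apply, Matrix.neg_apply, Matrix.one_apply, mul_zero, zero_mul, mul_ite, mul_one,
    ite_mul, mul_neg, neg_mul, Finset.sum_ite_eq', Finset.mem_univ, if_true,
    Finset.sum_const_zero, add_zero, zero_add, Finset.sum_neg_distrib]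
  simp only [Finset.sum_ite_eq, Finset.mem_univ, if_true]
  ring


lemma sumJ_self (v : k ⊕ k → F) :
    ∑ s, ∑ t, v s * Matrix.J k F s t * v t = 0 := by
  rw [sumJ]
  rw [sub_eq_zero]
  exact Finset.sum_congr rfl fun a _ => mul_comm _ _

lemma sumJ_swap (v w : k ⊕ k → F) :
    ∑ s, ∑ t, v s * Matrix.J k F s t * w t
      = -∑ s, ∑ t, w s * Matrix.J k F s t * v t := by
  rw [sumJ, sumJ, neg_sub]
  congr 1 <;> exact Finset.sum_congr rfl fun a _ => mul_comm _ _

/-- Entry expansion for `M * JJ * Nᵀ`. -/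
lemma mulJJmul (M N : Matrix (T k) (T k) F) (i j : T k) :
    (M * JJ F k * Nᵀ) i j
      = M i A2 * N j A1 - M i A1 * N j A2
        + ∑ s, ∑ t, M i (Sum.inr s) * Matrix.J k F s t * N j (Sum.inr t) := by
  rw [Matrix.mul_apply]
  simp only [Matrix.mul_apply, transpose_apply, Finset.sum_mul]
  rw [Finset.sum_comm]
  rw [Fintype.sum_sum_type]
  congr 1
  · -- the (Unit ⊕ Unit) block
    simp [JJ, fromBlocks, Matrix.J, Fintype.sum_sum_type, Matrix.one_apply, A1, A2]
    ring
  · -- the (k ⊕ k) block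
    refine Finset.sum_congr rfl fun s _ => ?_
    rw [Fintype.sum_sum_type]
    have h0 : ∀ a : Unit ⊕ Unit, M i (Sum.inr s) * JJ F k (Sum.inr s) (Sum.inl a) * N j (Sum.inl a) = 0 := by
      intro a; simp [JJ, fromBlocks]
    rw [Finset.sum_congr rfl fun a _ => h0 a]
    simp only [Finset.sum_const_zero, zero_add]
    refine Finset.sum_congr rfl fun t _ => ?_
    simp [JJ, fromBlocks]

/-- Entry expansion for `M * J * Nᵀ` over the small index. -/
lemma mulJmul' (M N : Matrix (k ⊕ k) (k ⊕ k) F) (i j : k ⊕ k) :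
    (M * Matrix.J k F * Nᵀ) i j = ∑ s, ∑ t, M i s * Matrix.J k F s t * N j t := by
  simp only [Matrix.mul_apply, transpose_apply, Finset.sum_mul]
  rw [Finset.sum_comm]

lemma Xmul (N : Matrix (T k) (T k) F) (i j : T k) :
    (X' F k * N) i j = N i j + (if i = A1 then N A2 j else 0) := by
  rw [X', Matrix.add_mul, Matrix.one_mul]
  simp only [Matrix.add_apply]
  congr 1
  rw [Matrix.mul_apply]
  simp [Matrix.single, ite_and, ite_mul, eq_comm]

lemma mulX (N : Matrix (T k) (T k) F) (i j : T k) :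
    (N * X' F k) i j = N i j + (if j = A2 then N i A1 else 0) := by
  rw [X', Matrix.mul_add, Matrix.mul_one]
  simp only [Matrix.add_apply]
  congr 1
  rw [Matrix.mul_apply]
  simp [Matrix.single, ite_and, mul_ite, eq_comm]


/-- the determined column entries -/
def wv (u : k ⊕ k → F) (S : Matrix (k ⊕ k) (k ⊕ k) F) (i : k ⊕ k) : F :=
  ∑ s, ∑ t, u s * Matrix.J k F s t * S i t

/-- The parametrized element of the centralizer. -/
def Mk (a : F) (u : k ⊕ k → F) (S : Matrix (k ⊕ k) (k ⊕ k) F) : Matrix (T k) (T k) F :=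
  Matrix.of fun i j =>
    match i, j with
    | Sum.inl (Sum.inl _), Sum.inl (Sum.inl _) => 1
    | Sum.inl (Sum.inl _), Sum.inl (Sum.inr _) => a
    | Sum.inl (Sum.inl _), Sum.inr j => u j
    | Sum.inl (Sum.inr _), Sum.inl (Sum.inl _) => 0
    | Sum.inl (Sum.inr _), Sum.inl (Sum.inr _) => 1
    | Sum.inl (Sum.inr _), Sum.inr _ => 0
    | Sum.inr _, Sum.inl (Sum.inl _) => 0
    | Sum.inr i, Sum.inl (Sum.inr _) => wv u S i
    | Sum.inr i, Sum.inr j => S i j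

section MkLemmas

variable {a : F} {u : k ⊕ k → F} {S : Matrix (k ⊕ k) (k ⊕ k) F}

@[simp] lemma Mk_11 (v w : Unit) : Mk a u S (Sum.inl (Sum.inl v)) (Sum.inl (Sum.inl w)) = 1 := rfl
@[simp] lemma Mk_12 (v w : Unit) : Mk a u S (Sum.inl (Sum.inl v)) (Sum.inl (Sum.inr w)) = a := rfl
@[simp] lemma Mk_1r (v : Unit) (j : k ⊕ k) : Mk a u S (Sum.inl (Sum.inl v)) (Sum.inr j) = u j := rfl
@[simp] lemma Mk_21 (v w : Unit) : Mk a u S (Sum.inl (Sum.inr v)) (Sum.inl (Sum.inl w)) = 0 := rfl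
@[simp] lemma Mk_22 (v w : Unit) : Mk a u S (Sum.inl (Sum.inr v)) (Sum.inl (Sum.inr w)) = 1 := rfl
@[simp] lemma Mk_2r (v : Unit) (j : k ⊕ k) : Mk a u S (Sum.inl (Sum.inr v)) (Sum.inr j) = 0 := rfl
@[simp] lemma Mk_r1 (i : k ⊕ k) (w : Unit) : Mk a u S (Sum.inr i) (Sum.inl (Sum.inl w)) = 0 := rfl
@[simp] lemma Mk_r2 (i : k ⊕ k) (w : Unit) : Mk a u S (Sum.inr i) (Sum.inl (Sum.inr w)) = wv u S i := rfl
@[simp] lemma Mk_rr (i j : k ⊕ k) : Mk a u S (Sum.inr i) (Sum.inr j) = S i j := rfl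

@[simp] lemma JJ_11 (v w : Unit) : JJ F k (Sum.inl (Sum.inl v)) (Sum.inl (Sum.inl w)) = 0 := by
  simp [JJ, Matrix.J, fromBlocks]
@[simp] lemma JJ_12 (v w : Unit) : JJ F k (Sum.inl (Sum.inl v)) (Sum.inl (Sum.inr w)) = -1 := by
  simp [JJ, Matrix.J, fromBlocks, Matrix.one_apply]
@[simp] lemma JJ_21 (v w : Unit) : JJ F k (Sum.inl (Sum.inr v)) (Sum.inl (Sum.inl w)) = 1 := by
  simp [JJ, Matrix.J, fromBlocks, Matrix.one_apply]
@[simp] lemma JJ_22 (v w : Unit) : JJ F k (Sum.inl (Sum.inr v)) (Sum.inl (Sum.inr w)) = 0 := by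
  simp [JJ, Matrix.J, fromBlocks]
@[simp] lemma JJ_1r (v : Unit ⊕ Unit) (j : k ⊕ k) : JJ F k (Sum.inl v) (Sum.inr j) = 0 := by
  simp [JJ, fromBlocks]
@[simp] lemma JJ_r1 (i : k ⊕ k) (w : Unit ⊕ Unit) : JJ F k (Sum.inr i) (Sum.inl w) = 0 := by
  simp [JJ, fromBlocks]
@[simp] lemma JJ_rr (i j : k ⊕ k) : JJ F k (Sum.inr i) (Sum.inr j) = Matrix.J k F i j := by
  simp [JJ, fromBlocks]

lemma Mk_symp (hS : S * Matrix.J k F * Sᵀ = Matrix.J k F) :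
    Mk a u S * JJ F k * (Mk a u S)ᵀ = JJ F k := by
  have hS' : ∀ i j, ∑ s, ∑ t, S i s * Matrix.J k F s t * S j t = Matrix.J k F i j :=
    fun i j => by rw [← mulJmul' S S i j, hS]
  ext i j
  rw [mulJJmul]
  rcases i with (⟨⟩|⟨⟩)|i <;> rcases j with (⟨⟩|⟨⟩)|j
  · simp [sumJ_self, -Fintype.sum_sum_type]
  · simp
  · simp [wv, -Fintype.sum_sum_type]
  · simp
  · simp
  · simp
  · simp only [Mk_r2, Mk_r1, Mk_11, Mk_12, Mk_1r, Mk_rr, JJ_r1, mul_one, zero_mul, sub_zero]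
    rw [sumJ_swap]
    simp [wv, -Fintype.sum_sum_type]
  · simp
  · simp [hS', -Fintype.sum_sum_type]

lemma Mk_comm : Mk a u S * X' F k = X' F k * Mk a u S := by
  ext i j
  rw [mulX, Xmul]
  congr 1
  rcases i with (⟨⟩|⟨⟩)|i <;> rcases j with (⟨⟩|⟨⟩)|j <;> simp

end MkLemmas

section Charact

variable {N : Matrix (T k) (T k) F}

lemma hcc_of (hc : N * X' F k = X' F k * N) (i j : T k) :
    (if j = A2 then N i A1 else 0) = (if i = A1 then N A2 j else 0) := by
  have h := (Matrix.ext_iff.mpr hc) i j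
  rw [Xmul, mulX] at h
  exact add_left_cancel h

lemma hcol_of (hc : N * X' F k = X' F k * N) {i : T k} (hi : i ≠ A1) : N i A1 = 0 := by
  have := hcc_of hc i A2
  simpa [hi] using this

lemma hrow_of (hc : N * X' F k = X' F k * N) {j : T k} (hj : j ≠ A2) : N A2 j = 0 := by
  have := hcc_of hc A1 j
  simpa [hj, eq_comm] using this

lemma hent_of (hs : N * JJ F k * Nᵀ = JJ F k) (i j : T k) :
    N i A2 * N j A1 - N i A1 * N j A2
      + ∑ s, ∑ t, N i (Sum.inr s) * Matrix.J k F s t * N j (Sum.inr t) = JJ F k i j := by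
  rw [← mulJJmul N N i j, hs]

lemma S_mem_of (hs : N * JJ F k * Nᵀ = JJ F k) (hc : N * X' F k = X' F k * N) :
    (Matrix.of fun i j => N (Sum.inr i) (Sum.inr j)) ∈ Matrix.symplecticGroup k F := by
  rw [SymplecticGroup.mem_iff]
  ext i j
  rw [mulJmul']
  have h := hent_of hs (Sum.inr i) (Sum.inr j)
  rw [hcol_of hc (by simp), hcol_of hc (by simp)] at h
  rw [JJ_rr] at h
  simp only [Matrix.of_apply]
  linear_combination h

lemma ht_of (h2 : (1:F) + 1 = 0) (hs : N * JJ F k * Nᵀ = JJ F k)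
    (hc : N * X' F k = X' F k * N) : N A1 A1 = 1 := by
  have hdiag : N A1 A1 = N A2 A2 := by simpa using hcc_of hc A1 A2
  have h := hent_of hs A1 A2
  have hsum0 : (∑ s, ∑ t, N A1 (Sum.inr s) * Matrix.J k F s t * N A2 (Sum.inr t)) = 0 :=
    Finset.sum_eq_zero fun s _ => Finset.sum_eq_zero fun t _ => by
      rw [hrow_of hc (by simp)]; ring
  rw [hsum0, hcol_of hc (by simp), ← hdiag] at h
  have hJ : JJ F k A1 A2 = -1 := by
    simp [JJ, fromBlocks, Matrix.J, Matrix.one_apply]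
  rw [hJ] at h
  have ht2 : N A1 A1 * N A1 A1 = 1 := by linear_combination -h
  have hz : (N A1 A1 - 1) * (N A1 A1 - 1) = 0 := by
    linear_combination ht2 + (1 - N A1 A1) * h2
  exact eq_of_sub_eq_zero (mul_self_eq_zero.mp hz)

lemma eq_Mk_of (h2 : (1:F) + 1 = 0) (hs : N * JJ F k * Nᵀ = JJ F k)
    (hc : N * X' F k = X' F k * N) :
    N = Mk (N A1 A2) (fun s => N A1 (Sum.inr s))
        (Matrix.of fun i j => N (Sum.inr i) (Sum.inr j)) := by
  have ht := ht_of h2 hs hc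
  have ht2 : N A2 A2 = 1 := by
    have hdiag : N A1 A1 = N A2 A2 := by simpa using hcc_of hc A1 A2
    rw [← hdiag, ht]
  have hw : ∀ i : k ⊕ k, N (Sum.inr i) A2
      = ∑ s, ∑ t, N A1 (Sum.inr s) * Matrix.J k F s t * N (Sum.inr i) (Sum.inr t) := by
    intro i
    have h := hent_of hs (Sum.inr i) A1
    rw [ht, hcol_of hc (by simp)] at h
    have hJ0 : JJ F k (Sum.inr i) A1 = 0 := by simp [JJ, fromBlocks]
    rw [hJ0, sumJ_swap] at h
    linear_combination h
  ext i j
  rcases i with (⟨⟩|⟨⟩)|i <;> rcases j with (⟨⟩|⟨⟩)|j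
  · exact ht
  · rfl
  · rfl
  · exact hcol_of hc (by simp)
  · exact ht2
  · exact hrow_of hc (by simp)
  · exact hcol_of hc (by simp)
  · rw [Mk_r2, wv]
    simp only [Matrix.of_apply]
    exact hw i
  · rfl

end Charact


/-- The parametrization of the centralizer of the transvection. -/
def centEquiv (h2 : (1:F) + 1 = 0) :
    {N : Matrix (T k) (T k) F // N * JJ F k * Nᵀ = JJ F k ∧ N * X' F k = X' F k * N}
      ≃ (F × (k ⊕ k → F)) × Matrix.symplecticGroup k F where
  toFun N := ((N.1 A1 A2, fun s => N.1 A1 (Sum.inr s)),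
    ⟨Matrix.of fun i j => N.1 (Sum.inr i) (Sum.inr j), S_mem_of N.2.1 N.2.2⟩)
  invFun p := ⟨Mk p.1.1 p.1.2 (p.2 : Matrix (k ⊕ k) (k ⊕ k) F),
    Mk_symp (SymplecticGroup.mem_iff.mp p.2.2), Mk_comm⟩
  left_inv N := Subtype.ext (eq_Mk_of h2 N.2.1 N.2.2).symm
  right_inv p := rfl

lemma X'_sq (h2 : (1:F) + 1 = 0) : X' F k * X' F k = (1 : Matrix (T k) (T k) F) := by
  ext i j
  rw [Xmul]
  rcases i with (⟨⟩|⟨⟩)|i <;> rcases j with (⟨⟩|⟨⟩)|j <;>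
    simp [X', Matrix.single, Matrix.one_apply, h2]

lemma X'_12 : X' F k A1 A2 = 1 := by
  simp [X', Matrix.single, Matrix.one_apply]

lemma X'_symp : X' F k * JJ F k * (X' F k)ᵀ = JJ F k := by
  ext i j
  rw [mulJJmul]
  rcases i with (⟨⟩|⟨⟩)|i <;> rcases j with (⟨⟩|⟨⟩)|j <;>
    simp [X', Matrix.single, Matrix.one_apply, ite_and, mul_ite, ite_mul,
      -Fintype.sum_sum_type, Finset.sum_ite_eq, Finset.sum_ite_eq']

end SpTransAux


open Matrix SpTransAux in
/-- For `q` an even prime power and `m ≥ 2`, `Sp_{2m}(q)` contains an involution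
(a symplectic transvection) whose centralizer has order `q^(2m-1) · |Sp_{2m-2}(q)|`. -/
theorem Sp_transvection_centralizer_card {q : ℕ} (hq : IsPrimePow q) (hqe : Even q)
    (F : Type*) [Field F] [Fintype F] (hF : Fintype.card F = q)
    {m : ℕ} (hm : 2 ≤ m) :
    ∃ x : Matrix.symplecticGroup (Fin m) F, orderOf x = 2 ∧
      Nat.card (Subgroup.centralizer ({x} : Set (Matrix.symplecticGroup (Fin m) F))) =
        q ^ (2 * m - 1) * Nat.card (Matrix.symplecticGroup (Fin (m - 1)) F) := by
  classical
  -- characteristic two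
  have h2 : (1:F) + 1 = 0 := by
    obtain ⟨p, n, hp, hn, rfl⟩ := hq
    have hpp : p.Prime := hp.nat_prime
    have hp2 : p = 2 := by
      obtain ⟨r, hr⟩ := hqe
      have h2d : 2 ∣ p ^ n := ⟨r, by omega⟩
      have h2p := Nat.Prime.dvd_of_dvd_pow Nat.prime_two h2d
      exact ((Nat.prime_dvd_prime_iff_eq Nat.prime_two hpp).mp h2p).symm
    subst hp2
    have hc0 : ((2 ^ n : ℕ) : F) = 0 := by rw [← hF]; exact FiniteField.cast_card_eq_zero F
    have hc1 : ((2:F)) ^ n = 0 := by push_cast at hc0; exact hc0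
    have h20 : (2:F) = 0 := (pow_eq_zero_iff (by omega)).mp hc1
    linear_combination h20
  -- index shuffle
  let f : Fin m ≃ Unit ⊕ Fin (m-1) :=
    (finCongr (by omega : m = 1 + (m-1))).trans
      (finSumFinEquiv.symm.trans (Equiv.sumCongr finOneEquiv (Equiv.refl (Fin (m-1)))))
  let e : (Fin m ⊕ Fin m) ≃ T (Fin (m-1)) :=
    (f.sumCongr f).trans (Equiv.sumSumSumComm _ _ _ _)
  have hJ : (Matrix.J (Fin m) F).submatrix ⇑e.symm ⇑e.symm = JJ F (Fin (m-1)) := by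
    ext i j
    rcases i with (⟨⟩|⟨⟩)|(i|i) <;> rcases j with (⟨⟩|⟨⟩)|(j|j) <;>
      simp [e, Matrix.J, fromBlocks, Matrix.one_apply, Matrix.submatrix_apply,
        EmbeddingLike.apply_eq_iff_eq]
  have hinj : Function.Injective
      (fun M : Matrix (Fin m ⊕ Fin m) (Fin m ⊕ Fin m) F => M.submatrix ⇑e.symm ⇑e.symm) := by
    intro M N h
    have := congrArg (fun Z : Matrix (T (Fin (m-1))) (T (Fin (m-1))) F => Z.submatrix ⇑e ⇑e) h
    simpa [Matrix.submatrix_submatrix, Equiv.symm_comp_self] using this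
  have hsub : ∀ M N : Matrix (Fin m ⊕ Fin m) (Fin m ⊕ Fin m) F,
      (M * N).submatrix ⇑e.symm ⇑e.symm
        = M.submatrix ⇑e.symm ⇑e.symm * N.submatrix ⇑e.symm ⇑e.symm :=
    fun M N => (Matrix.submatrix_mul_equiv M N _ e.symm _).symm
  -- the transvection
  set X : Matrix (Fin m ⊕ Fin m) (Fin m ⊕ Fin m) F := (X' F (Fin (m-1))).submatrix ⇑e ⇑e with hXdef
  have hXe : X.submatrix ⇑e.symm ⇑e.symm = X' F (Fin (m-1)) := by
    rw [hXdef, Matrix.submatrix_submatrix, Equiv.self_comp_symm, Matrix.submatrix_id_id]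
  have hXmem : X ∈ Matrix.symplecticGroup (Fin m) F := by
    rw [SymplecticGroup.mem_iff]
    apply hinj
    simp only
    rw [hsub, hsub, ← Matrix.transpose_submatrix, hXe, hJ, X'_symp]
  set x : Matrix.symplecticGroup (Fin m) F := ⟨X, hXmem⟩ with hxdef
  refine ⟨x, ?_, ?_⟩
  · -- order two
    have hx2 : x ^ 2 = 1 := by
      apply Subtype.ext
      have hXX : X * X = (1 : Matrix (Fin m ⊕ Fin m) (Fin m ⊕ Fin m) F) := by
        rw [hXdef, Matrix.submatrix_mul_equiv, X'_sq h2, Matrix.submatrix_one_equiv]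
      calc ((x ^ 2 : Matrix.symplecticGroup (Fin m) F) : Matrix _ _ F)
          = X * X := by rw [pow_two]; rfl
        _ = 1 := hXX
    have hx1 : x ≠ 1 := by
      intro hx
      have hX1 : X = 1 := congrArg Subtype.val hx
      have h01 := congrFun (congrFun hX1 (e.symm A1)) (e.symm A2)
      rw [hXdef] at h01
      simp only [Matrix.submatrix_apply, Equiv.apply_symm_apply, X'_12, Matrix.one_apply] at h01
      rw [if_neg (by simp [EmbeddingLike.apply_eq_iff_eq])] at h01
      exact one_ne_zero h01
    exact orderOf_eq_prime hx2 hx1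
  · -- cardinality
    have E1 : ↥(Subgroup.centralizer ({x} : Set (Matrix.symplecticGroup (Fin m) F)))
        ≃ {M : Matrix (Fin m ⊕ Fin m) (Fin m ⊕ Fin m) F //
            M ∈ Matrix.symplecticGroup (Fin m) F ∧ M * X = X * M} :=
      { toFun := fun g => ⟨(g.1 : Matrix (Fin m ⊕ Fin m) (Fin m ⊕ Fin m) F), g.1.2, by
          have h := congrArg Subtype.val (Subgroup.mem_centralizer_singleton_iff.mp g.2)
          simp only [MulMemClass.coe_mul] at h
          exact h⟩
        invFun := fun M => ⟨⟨M.1, M.2.1⟩, Subgroup.mem_centralizer_singleton_iff.mpr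
          (Subtype.ext (by simp only [MulMemClass.coe_mul]; exact M.2.2))⟩
        left_inv := fun g => rfl
        right_inv := fun M => rfl }
    have E2 : {M : Matrix (Fin m ⊕ Fin m) (Fin m ⊕ Fin m) F //
            M ∈ Matrix.symplecticGroup (Fin m) F ∧ M * X = X * M}
        ≃ {N : Matrix (T (Fin (m-1))) (T (Fin (m-1))) F //
            N * JJ F (Fin (m-1)) * Nᵀ = JJ F (Fin (m-1))
              ∧ N * X' F (Fin (m-1)) = X' F (Fin (m-1)) * N} := by
      refine (Matrix.reindex e e).subtypeEquiv fun M => ?_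
      rw [Matrix.reindex_apply, SymplecticGroup.mem_iff]
      constructor
      · rintro ⟨h1, h3⟩
        constructor
        · rw [← hJ, Matrix.transpose_submatrix, ← hsub, ← hsub, h1]
        · rw [← hXe, ← hsub, ← hsub, h3]
      · rintro ⟨h1, h3⟩
        constructor
        · apply hinj
          simp only
          rw [hsub, hsub, hJ, ← Matrix.transpose_submatrix, h1]
        · apply hinj
          simp only
          rw [hsub, hsub, hXe, h3]
    have E3 := centEquiv (k := Fin (m-1)) h2
    have hcard := Nat.card_congr ((E1.trans E2).trans E3)
    rw [hcard, Nat.card_prod, Nat.card_prod, Nat.card_eq_fintype_card (α := F), hF,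
      Nat.card_fun, Nat.card_eq_fintype_card (α := F), hF]
    have hkk : Nat.card (Fin (m-1) ⊕ Fin (m-1)) = (m-1) + (m-1) := by
      simp [Nat.card_eq_fintype_card]
    rw [hkk]
    rw [← pow_succ']
    congr 2
    omega
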